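/- With ρ₀^1 = (1/2)(|0⟩⟨0| + |+⟩⟨+|), ρ₁^1 = (1/2)(|1⟩⟨1| + |−⟩⟨−|), and ρ_b^k defined recursively by ρ₀^k = (ρ₀^{k−1}⊗ρ₀^1 + ρ₁^{k−1}⊗ρ₁^1)/2, ρ₁^k = (ρ₀^{k−1}⊗ρ₁^1 + ρ₁^{k−1}⊗ρ₀^1)/2, the trace distance D(ρ₀^k, ρ₁^k) = (√2/2)^k. -/

import Mathlib

open Matrix Kronecker ComplexOrder

/-- `|M| = √(Mᴴ M)`, the positive-semidefinite absolute value of a matrix. -/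
noncomputable def matAbs {n : Type*} [Fintype n] [DecidableEq n]
    (M : Matrix n n ℂ) : Matrix n n ℂ :=
  ((Matrix.posSemidef_conjTranspose_mul_self M).1.eigenvectorUnitary : Matrix n n ℂ) *
    diagonal ((↑) ∘ Real.sqrt ∘ (Matrix.posSemidef_conjTranspose_mul_self M).1.eigenvalues) *
    (star ((Matrix.posSemidef_conjTranspose_mul_self M).1.eigenvectorUnitary : Matrix n n ℂ))

/-- Trace distance `D(A,B) = (1/2) Tr |A - B|`. -/
noncomputable def traceDist {n : Type*} [Fintype n] [DecidableEq n]
    (A B : Matrix n n ℂ) : ℝ :=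
  (1 / 2) * (Matrix.trace (matAbs (A - B))).re

lemma myconjT_kronecker {m n : Type*} (A : Matrix m m ℂ) (B : Matrix n n ℂ) :
    (A ⊗ₖ B)ᴴ = Aᴴ ⊗ₖ Bᴴ := by
  ext ⟨i, j⟩ ⟨k, l⟩
  simp [Matrix.conjTranspose_apply, Matrix.kroneckerMap_apply, mul_comm]

lemma mysub_kronecker {m n : Type*} (A B : Matrix m m ℂ) (C D : Matrix n n ℂ) :
    (A - B) ⊗ₖ (C - D) = (A ⊗ₖ C + B ⊗ₖ D) - (A ⊗ₖ D + B ⊗ₖ C) := by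
  ext ⟨i, j⟩ ⟨k, l⟩
  simp [Matrix.kroneckerMap_apply]
  ring

lemma mymatAbs_smul_one {n : Type*} [Fintype n] [DecidableEq n]
    (M : Matrix n n ℂ) (c : ℝ) (hc : 0 ≤ c) (h : Mᴴ * M = (c : ℂ) • 1) :
    matAbs M = ((Real.sqrt c : ℝ) : ℂ) • 1 := by
  have hpsd : Matrix.PosSemidef (((Real.sqrt c : ℝ) : ℂ) • (1 : Matrix n n ℂ)) := by
    rw [← Matrix.diagonal_one, ← Matrix.diagonal_smul]
    refine Matrix.PosSemidef.diagonal fun i => ?_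
    simp only [Pi.smul_apply, smul_eq_mul, mul_one]
    exact Complex.zero_le_real.mpr (Real.sqrt_nonneg c)
  have hsq : (((Real.sqrt c : ℝ) : ℂ) • (1 : Matrix n n ℂ)) ^ 2 = Mᴴ * M := by
    rw [h, smul_pow, one_pow, ← Complex.ofReal_pow, Real.sq_sqrt hc]
  set hH := (Matrix.posSemidef_conjTranspose_mul_self M).1 with hHdef
  set U : Matrix n n ℂ := (hH.eigenvectorUnitary : Matrix n n ℂ) with hU
  have hUU : star U * U = 1 := Unitary.coe_star_mul_self _
  have hUU' : U * star U = 1 := Unitary.coe_mul_star_self _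
  have hspec := hH.spectral_theorem
  rw [Unitary.conjStarAlgAut_apply] at hspec
  have hspec' : Mᴴ * M = U * diagonal ((↑) ∘ hH.eigenvalues : n → ℂ) * star U := hspec
  have hD : diagonal ((↑) ∘ hH.eigenvalues : n → ℂ) = (c : ℂ) • 1 := by
    calc diagonal ((↑) ∘ hH.eigenvalues : n → ℂ)
        = (star U * U) * diagonal ((↑) ∘ hH.eigenvalues : n → ℂ) * (star U * U) := by
          rw [hUU, one_mul, mul_one]
      _ = star U * (U * diagonal ((↑) ∘ hH.eigenvalues : n → ℂ) * star U) * U := by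
          simp only [Matrix.mul_assoc]
      _ = (c : ℂ) • 1 := by
          rw [← hspec', h, Matrix.mul_smul, Matrix.smul_mul, Matrix.mul_one, hUU]
  have heig : ∀ i, hH.eigenvalues i = c := by
    intro i
    have := congrFun (congrFun hD i) i
    simpa [Matrix.diagonal_apply] using this
  have hdiag : diagonal ((↑) ∘ Real.sqrt ∘ hH.eigenvalues : n → ℂ)
      = ((Real.sqrt c : ℝ) : ℂ) • 1 := by
    ext i j
    by_cases hij : i = j
    · subst hij; simp [heig]
    · simp [Matrix.diagonal_apply, hij]
  unfold matAbs
  show U * diagonal ((↑) ∘ Real.sqrt ∘ hH.eigenvalues : n → ℂ) * star U = _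
  rw [hdiag, Matrix.mul_smul, Matrix.smul_mul, Matrix.mul_one, hUU']

theorem traceDist_conjugate_coding_pow
    (ρ : Bool → (k : ℕ) → Matrix (Fin (2 ^ k)) (Fin (2 ^ k)) ℂ)
    (h0 : ρ false 1 = (1/4 : ℂ) • !![3, 1; 1, 1])
    (h1 : ρ true 1 = (1/4 : ℂ) • !![1, -1; -1, 3])
    (hrec0 : ∀ k : ℕ, 1 ≤ k → ρ false (k + 1) =
      Matrix.reindex (finProdFinEquiv.trans (finCongr (by ring : 2 ^ k * 2 ^ 1 = 2 ^ (k + 1))))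
        (finProdFinEquiv.trans (finCongr (by ring : 2 ^ k * 2 ^ 1 = 2 ^ (k + 1))))
        ((1 / 2 : ℂ) • (ρ false k ⊗ₖ ρ false 1 + ρ true k ⊗ₖ ρ true 1)))
    (hrec1 : ∀ k : ℕ, 1 ≤ k → ρ true (k + 1) =
      Matrix.reindex (finProdFinEquiv.trans (finCongr (by ring : 2 ^ k * 2 ^ 1 = 2 ^ (k + 1))))
        (finProdFinEquiv.trans (finCongr (by ring : 2 ^ k * 2 ^ 1 = 2 ^ (k + 1))))
        ((1 / 2 : ℂ) • (ρ false k ⊗ₖ ρ true 1 + ρ true k ⊗ₖ ρ false 1))) :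
    ∀ k : ℕ, 1 ≤ k →
      traceDist (ρ false k) (ρ true k) = (Real.sqrt 2 / 2) ^ k := by
  have base : (ρ false 1 - ρ true 1)ᴴ * (ρ false 1 - ρ true 1)
      = (((4 : ℝ) * (1/8) ^ 1 : ℝ) : ℂ) • 1 := by
    rw [h0, h1]
    ext i j
    fin_cases i <;> fin_cases j <;>
      simp [Matrix.mul_apply, Fin.sum_univ_succ, Matrix.one_apply,
        Matrix.conjTranspose_apply, Complex.ext_iff] <;> norm_num
  have key : ∀ k : ℕ, 1 ≤ k → (ρ false k - ρ true k)ᴴ * (ρ false k - ρ true k)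
      = (((4 : ℝ) * (1/8) ^ k : ℝ) : ℂ) • 1 := by
    intro k hk
    induction k, hk using Nat.le_induction with
    | base => exact base
    | succ k hk ih =>
      set e := (finProdFinEquiv.trans
        (finCongr (by ring : 2 ^ k * 2 ^ 1 = 2 ^ (k + 1)))) with he
      have hΔ : ρ false (k+1) - ρ true (k+1)
          = Matrix.reindex e e
            ((1 / 2 : ℂ) • ((ρ false k - ρ true k) ⊗ₖ (ρ false 1 - ρ true 1))) := by
        rw [hrec0 k hk, hrec1 k hk]
        simp only [Matrix.reindex_apply]
        rw [mysub_kronecker, smul_sub, Matrix.submatrix_sub]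
        rfl
      rw [hΔ]
      simp only [Matrix.reindex_apply, Matrix.conjTranspose_submatrix,
        Matrix.submatrix_mul_equiv]
      rw [Matrix.conjTranspose_smul, Matrix.smul_mul, Matrix.mul_smul, smul_smul,
        myconjT_kronecker, ← Matrix.mul_kronecker_mul, ih, base,
        Matrix.smul_kronecker, Matrix.kronecker_smul, Matrix.one_kronecker_one,
        smul_smul]
      simp only [Matrix.submatrix_smul, Pi.smul_apply, Matrix.submatrix_one_equiv,
        smul_smul]
      congr 1
      simp only [Complex.star_def, map_div₀, _root_.map_one, map_ofNat]
      push_cast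
      ring
  intro k hk
  have habs := mymatAbs_smul_one _ _ (by positivity) (key k hk)
  unfold traceDist
  rw [habs]
  simp only [Matrix.trace_smul, Matrix.trace_one, smul_eq_mul, Complex.re_ofReal_mul,
    Complex.natCast_re, Fintype.card_fin]
  have h2 : Real.sqrt 2 ^ 2 = 2 := Real.sq_sqrt (by norm_num)
  have hs : Real.sqrt ((4 : ℝ) * (1/8) ^ k)
      = 2 * (Real.sqrt 2 / 2) ^ k / 2 ^ k := by
    have hhalf : ((Real.sqrt 2 / 2) ^ k) ^ 2 = (1/2 : ℝ) ^ k := by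
      rw [← pow_mul, mul_comm k 2, pow_mul, div_pow, h2]; norm_num
    have hsq2 : ((2 : ℝ) ^ k) ^ 2 = 4 ^ k := by
      rw [← pow_mul, mul_comm k 2, pow_mul]; norm_num
    have hval : (2 * (Real.sqrt 2 / 2) ^ k / 2 ^ k) ^ 2 = (4 : ℝ) * (1/8) ^ k := by
      rw [div_pow, mul_pow, hhalf, hsq2, div_eq_iff (by positivity), mul_assoc,
        ← mul_pow]
      norm_num
    rw [← hval]
    exact Real.sqrt_sq (by positivity)
  push_cast
  rw [hs, div_mul_cancel₀ _ (by positivity : (2:ℝ) ^ k ≠ 0)]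
  ring
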